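/- Let H be a complex Hilbert space equipped with a grading: a bounded self-adjoint unitary γ on H, with even part H⁰ = ker(γ−1) and odd part H¹ = ker(γ+1). Let D be a self-adjoint operator on H that is odd, i.e. γ·Dom(D) ⊆ Dom(D) and D(γψ) = −γ(Dψ) for all ψ ∈ Dom(D), and Fredholm in the sense that ker(D) is finite-dimensional and the range of D is closed. Suppose there exists a bounded self-adjoint unitary e on H that is odd (eγ = −γe) and satisfies e·Dom(D) ⊆ Dom(D), such that the anticommutator ψ ↦ D(eψ) + e(Dψ) (ψ ∈ Dom(D)) extends to a bounded operator A on H for which A∘(D+i)⁻¹ is a compact operator. Then dim(ker(D) ∩ H⁰) = dim(ker(D) ∩ H¹); equivalently, writing D in off-diagonal form with respect to the grading, the Fredholm index of its even-to-odd component D₊ is zero, i.e. the class [D] ∈ KK⁰(ℂ,ℂ) ≅ ℤ vanishes. [Hilbert-space case of Lemma 4.1 (cliff_triv).] -/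

import Mathlib

open Filter Topology

section CliffTrivAux

open Module Submodule ContinuousLinearMap

set_option linter.unusedSectionVars false

variable {Y : Type*} [NormedAddCommGroup Y] [InnerProductSpace ℂ Y] [CompleteSpace Y]

lemma compact_of_range_le_findim {X : Type*} [NormedAddCommGroup X] [NormedSpace ℂ X]
    (f : X →L[ℂ] Y) (V : Submodule ℂ Y) [FiniteDimensional ℂ V] (hV : ∀ x, f x ∈ V) :
    IsCompactOperator ⇑f := by
  set g : X →L[ℂ] ↥V := f.codRestrict V hV with hg
  have hg_cpt : IsCompactOperator ⇑g := by
    rw [show (⇑g : X → ↥V) = ⇑g.toLinearMap from rfl,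
      isCompactOperator_iff_image_closedBall_subset_compact g.toLinearMap one_pos]
    refine ⟨Metric.closedBall (0 : ↥V) ‖g‖, isCompact_closedBall _ _, ?_⟩
    rintro y ⟨x, hx, rfl⟩
    simp only [Metric.mem_closedBall, dist_zero_right] at hx ⊢
    calc ‖g x‖ ≤ ‖g‖ * ‖x‖ := g.le_opNorm x
    _ ≤ ‖g‖ * 1 := mul_le_mul_of_nonneg_left hx (norm_nonneg g)
    _ = ‖g‖ := mul_one _
  exact hg_cpt.continuous_comp continuous_subtype_val

lemma finrank_add_orth_inf {V U : Submodule ℂ Y} [FiniteDimensional ℂ V] (hUV : U ≤ V) :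
    Module.finrank ℂ ↥U + Module.finrank ℂ ↥(Uᗮ ⊓ V) = Module.finrank ℂ ↥V := by
  set U' : Submodule ℂ ↥V := U.comap V.subtype with hU'
  have hmap : Submodule.map V.subtype U'ᗮ = Uᗮ ⊓ V := by
    ext x
    simp only [Submodule.mem_map, Submodule.mem_inf, Submodule.mem_orthogonal]
    constructor
    · rintro ⟨v, hv, rfl⟩
      refine ⟨fun u hu => ?_, v.2⟩
      have := hv ⟨u, hUV hu⟩ (by simpa [hU'] using hu)
      simpa [Submodule.coe_inner] using this
    · rintro ⟨hx, hxV⟩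
      refine ⟨⟨x, hxV⟩, fun u hu => ?_, rfl⟩
      simpa [Submodule.coe_inner] using hx u.1 (by simpa [hU'] using hu)
  have h1 : Module.finrank ℂ ↥U' + Module.finrank ℂ ↥U'ᗮ = Module.finrank ℂ ↥V :=
    Submodule.finrank_add_finrank_orthogonal U'
  have h2 : Module.finrank ℂ ↥U' = Module.finrank ℂ ↥U :=
    (Submodule.comapSubtypeEquivOfLe hUV).finrank_eq
  have h3 : Module.finrank ℂ ↥U'ᗮ = Module.finrank ℂ ↥(Uᗮ ⊓ V) := by
    rw [← hmap]
    exact (Submodule.equivMapOfInjective V.subtype V.injective_subtype U'ᗮ).finrank_eq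
  omega

lemma quotient_equiv_orth (R : Submodule ℂ Y) (hR : IsClosed (R : Set Y)) :
    Nonempty ((Y ⧸ R) ≃ₗ[ℂ] ↥Rᗮ) := by
  haveI : CompleteSpace R := hR.completeSpace_coe
  exact ⟨Submodule.quotientEquivOfIsCompl R Rᗮ Submodule.isCompl_orthogonal_of_hasOrthogonalProjection⟩

lemma loc_alt (T : Y →L[ℂ] Y) (V : Submodule ℂ Y) [FiniteDimensional ℂ V]
    (hTV : ∀ v ∈ V, T v ∈ V) (hTfix : ∀ y ∈ Vᗮ, T y = y) :
    IsClosed ((LinearMap.range (T : Y →ₗ[ℂ] Y) : Submodule ℂ Y) : Set Y) ∧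
    FiniteDimensional ℂ ↥(LinearMap.ker (T : Y →ₗ[ℂ] Y)) ∧
    FiniteDimensional ℂ ↥(LinearMap.range (T : Y →ₗ[ℂ] Y))ᗮ ∧
    Module.finrank ℂ ↥(LinearMap.ker (T : Y →ₗ[ℂ] Y)) = Module.finrank ℂ ↥(LinearMap.range (T : Y →ₗ[ℂ] Y))ᗮ := by
  haveI : CompleteSpace V := FiniteDimensional.complete ℂ V
  set TV : ↥V →ₗ[ℂ] ↥V := (T : Y →ₗ[ℂ] Y).restrict hTV with hTVdef
  set P : Y →L[ℂ] Y := V.subtypeL.comp (orthogonalProjection V) with hPdef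
  have hPmem : ∀ y, P y ∈ V := fun y => (orthogonalProjection V y).2
  have hPorth : ∀ y : Y, y - P y ∈ Vᗮ := fun y => Submodule.sub_starProjection_mem_orthogonal y
  have hPself : ∀ y ∈ V, P y = y := by
    intro y hy
    simp only [hPdef, ContinuousLinearMap.comp_apply, Submodule.subtypeL_apply]
    exact Submodule.starProjection_eq_self_iff.mpr hy
  have hPzero : ∀ y ∈ Vᗮ, P y = 0 := by
    intro y hy
    simp only [hPdef, ContinuousLinearMap.comp_apply, Submodule.subtypeL_apply]
    rw [Submodule.orthogonalProjectionOnto_apply_of_mem_orthogonal hy]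
    rfl
  have hdecomp : ∀ x : Y, T x = T (P x) + (x - P x) := by
    intro x
    rw [← hTfix (x - P x) (hPorth x), ← map_add]
    congr 1
    abel
  -- kernel description
  have hker : LinearMap.ker (T : Y →ₗ[ℂ] Y) = Submodule.map V.subtype (LinearMap.ker TV) := by
    ext x
    simp only [LinearMap.mem_ker, Submodule.mem_map]
    constructor
    · intro hx
      have hd : T (P x) + (x - P x) = 0 := by rw [← hdecomp]; exact hx
      have hxP : x - P x ∈ V := by
        have hx2 : x - P x = -T (P x) := by
          rw [eq_neg_iff_add_eq_zero, add_comm]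
          exact hd
        rw [hx2]
        exact neg_mem (hTV _ (hPmem x))
      have hx0 : x - P x = 0 := by
        have := (Submodule.orthogonal_disjoint V).le_bot ⟨hxP, hPorth x⟩
        simpa using this
      have hxV : x ∈ V := by
        have hx3 : x = P x := sub_eq_zero.mp hx0
        rw [hx3]; exact hPmem x
      refine ⟨⟨x, hxV⟩, ?_, rfl⟩
      show TV ⟨x, hxV⟩ = 0
      ext
      simpa [hTVdef, LinearMap.restrict_apply] using hx
    · rintro ⟨v, hv, rfl⟩
      show T (V.subtype v) = 0
      have h1 : T (V.subtype v) = ((TV v : ↥V) : Y) := rfl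
      rw [h1, hv]
      rfl
  -- range description
  have hranset : (LinearMap.range (T : Y →ₗ[ℂ] Y) : Set Y)
      = ⇑P ⁻¹' ((Submodule.map V.subtype (LinearMap.range TV) : Submodule ℂ Y) : Set Y) := by
    ext y
    simp only [SetLike.mem_coe, LinearMap.mem_range, Set.mem_preimage, Submodule.mem_map]
    constructor
    · rintro ⟨x, rfl⟩
      refine ⟨TV ⟨P x, hPmem x⟩, LinearMap.mem_range_self _ _, ?_⟩
      have h1 : (V.subtype (TV ⟨P x, hPmem x⟩) : Y) = T (P x) := rfl
      simp only [ContinuousLinearMap.coe_coe]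
      rw [h1, hdecomp x, map_add, hPself _ (hTV _ (hPmem x)), hPzero _ (hPorth x), add_zero]
    · rintro ⟨w, ⟨u, hu⟩, hw⟩
      refine ⟨(u : Y) + (y - P y), ?_⟩
      have h1 : T (u : Y) = P y := by
        have h2 : T (u : Y) = ((TV u : ↥V) : Y) := rfl
        rw [h2, hu, ← hw]; rfl
      simp only [ContinuousLinearMap.coe_coe]
      rw [map_add, h1, hTfix _ (hPorth y)]
      abel
  haveI : FiniteDimensional ℂ ↥(Submodule.map V.subtype (LinearMap.range TV)) :=
    Module.Finite.map _ _
  have hclosed : IsClosed ((LinearMap.range (T : Y →ₗ[ℂ] Y) : Submodule ℂ Y) : Set Y) := by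
    rw [hranset]
    exact (Submodule.closed_of_finiteDimensional _).preimage P.continuous
  -- range as a sup
  have hrange : LinearMap.range (T : Y →ₗ[ℂ] Y) = Submodule.map V.subtype (LinearMap.range TV) ⊔ Vᗮ := by
    apply le_antisymm
    · rintro y ⟨x, rfl⟩
      simp only [ContinuousLinearMap.coe_coe]
      rw [hdecomp x]
      refine Submodule.add_mem_sup ?_ (hPorth x)
      exact ⟨TV ⟨P x, hPmem x⟩, LinearMap.mem_range_self _ _, rfl⟩
    · refine sup_le ?_ ?_
      · rintro y ⟨w, ⟨u, hu⟩, rfl⟩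
        refine ⟨(u : Y), ?_⟩
        simp only [ContinuousLinearMap.coe_coe]
        rw [show T (u : Y) = ((TV u : ↥V) : Y) from rfl, hu]
        exact rfl
      · intro y hy
        exact ⟨y, hTfix y hy⟩
  have horth : (LinearMap.range (T : Y →ₗ[ℂ] Y))ᗮ
      = (Submodule.map V.subtype (LinearMap.range TV))ᗮ ⊓ V := by
    rw [hrange, ← Submodule.inf_orthogonal, Submodule.orthogonal_orthogonal]
  have hUV : Submodule.map V.subtype (LinearMap.range TV) ≤ V := Submodule.map_subtype_le _ _
  have h4 := finrank_add_orth_inf (Y := Y) hUV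
  have h5 : Module.finrank ℂ ↥(LinearMap.range TV) + Module.finrank ℂ ↥(LinearMap.ker TV)
      = Module.finrank ℂ ↥V := LinearMap.finrank_range_add_finrank_ker TV
  have h6 : Module.finrank ℂ ↥(Submodule.map V.subtype (LinearMap.range TV))
      = Module.finrank ℂ ↥(LinearMap.range TV) :=
    ((Submodule.equivMapOfInjective V.subtype V.injective_subtype _).finrank_eq).symm
  have h7 : Module.finrank ℂ ↥(LinearMap.ker (T : Y →ₗ[ℂ] Y)) = Module.finrank ℂ ↥(LinearMap.ker TV) := by
    rw [hker]
    exact ((Submodule.equivMapOfInjective V.subtype V.injective_subtype _).finrank_eq).symm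
  refine ⟨hclosed, ?_, ?_, ?_⟩
  · rw [hker]; exact Module.Finite.map _ _
  · rw [horth]
    exact Submodule.finiteDimensional_of_le inf_le_right
  · rw [h7, horth]
    omega

lemma exists_finrank_approx (C : Y →L[ℂ] Y) (hC : IsCompactOperator ⇑C) :
    ∃ F : Y →L[ℂ] Y, (∃ V : Submodule ℂ Y, FiniteDimensional ℂ V ∧ ∀ x, F x ∈ V) ∧
      ‖C - F‖ < 1 := by
  have hC' : IsCompactOperator ⇑C.toLinearMap := hC
  obtain ⟨K, hK, hKsub⟩ :=
    (isCompactOperator_iff_image_closedBall_subset_compact C.toLinearMap one_pos).mp hC'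
  obtain ⟨t, htfin, htsub⟩ := (Metric.totallyBounded_iff.mp hK.totallyBounded) (1/4) (by norm_num)
  set V : Submodule ℂ Y := Submodule.span ℂ t with hV
  haveI : FiniteDimensional ℂ V := FiniteDimensional.span_of_finite ℂ htfin
  haveI : CompleteSpace V := FiniteDimensional.complete ℂ V
  set P : Y →L[ℂ] Y := V.subtypeL.comp (orthogonalProjection V) with hPdef
  have hPnorm : ∀ z : Y, ‖P z‖ ≤ ‖z‖ := by
    intro z
    have h1 : ‖P z‖ = ‖orthogonalProjection V z‖ := rfl
    rw [h1]
    calc ‖orthogonalProjection V z‖ ≤ ‖orthogonalProjection V‖ * ‖z‖ :=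
          (orthogonalProjection V).le_opNorm z
    _ ≤ 1 * ‖z‖ := mul_le_mul_of_nonneg_right (orthogonalProjection_norm_le V) (norm_nonneg z)
    _ = ‖z‖ := one_mul _
  have hPself : ∀ y ∈ V, P y = y := by
    intro y hy
    simp only [hPdef, ContinuousLinearMap.comp_apply, Submodule.subtypeL_apply]
    exact Submodule.starProjection_eq_self_iff.mpr hy
  refine ⟨P.comp C, ⟨V, inferInstance, fun x => (orthogonalProjection V (C x)).2⟩, ?_⟩
  have hbound : ‖C - P.comp C‖ ≤ 1/2 := by
    refine ContinuousLinearMap.opNorm_le_bound _ (by norm_num) fun x => ?_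
    rcases eq_or_ne x 0 with rfl | hx
    · simp
    · have hxpos : (0:ℝ) < ‖x‖ := norm_pos_iff.mpr hx
      set u : Y := (‖x‖ : ℝ)⁻¹ • x with hu
      have hunorm : ‖u‖ ≤ 1 := by
        rw [hu, norm_smul]
        simp [abs_of_nonneg (le_of_lt hxpos), inv_mul_cancel₀ (ne_of_gt hxpos)]
      have hmem : C u ∈ K := hKsub ⟨u, by simpa [Metric.mem_closedBall, dist_zero_right] using hunorm, rfl⟩
      obtain ⟨y, hyt, hy⟩ : ∃ y ∈ t, C u ∈ Metric.ball y (1/4) := by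
        have := htsub hmem
        simpa using this
      have hyV : y ∈ V := Submodule.subset_span hyt
      have hdist : ‖C u - y‖ < 1/4 := by
        rw [← dist_eq_norm]
        exact Metric.mem_ball.mp hy
      have key : ‖C u - P (C u)‖ ≤ 1/2 := by
        have h2 : ‖C u - P (C u)‖ ≤ ‖C u - y‖ + ‖y - P (C u)‖ := by
          have := norm_add_le (C u - y) (y - P (C u))
          simpa using this
        have h3 : ‖y - P (C u)‖ = ‖P (y - C u)‖ := by rw [map_sub, hPself y hyV]
        have h4 : ‖P (y - C u)‖ ≤ ‖y - C u‖ := hPnorm _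
        have h5 : ‖y - C u‖ = ‖C u - y‖ := norm_sub_rev _ _
        calc ‖C u - P (C u)‖ ≤ ‖C u - y‖ + ‖y - P (C u)‖ := h2
        _ = ‖C u - y‖ + ‖P (y - C u)‖ := by rw [h3]
        _ ≤ ‖C u - y‖ + ‖y - C u‖ := by linarith
        _ = ‖C u - y‖ + ‖C u - y‖ := by rw [h5]
        _ ≤ 1/2 := by linarith
      have hscale : (C - P.comp C) x = ‖x‖ • ((C - P.comp C) u) := by
        rw [hu, ContinuousLinearMap.map_smul_of_tower, smul_smul,
          mul_inv_cancel₀ (ne_of_gt hxpos), one_smul]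
      rw [hscale, norm_smul]
      simp only [norm_norm]
      calc ‖x‖ * ‖(C - P.comp C) u‖ ≤ ‖x‖ * (1/2) := by
            refine mul_le_mul_of_nonneg_left ?_ (le_of_lt hxpos)
            simpa [ContinuousLinearMap.sub_apply] using key
      _ = 1/2 * ‖x‖ := by ring
  linarith

lemma fredholm_alternative (C : Y →L[ℂ] Y) (hC : IsCompactOperator ⇑C) :
    FiniteDimensional ℂ ↥(LinearMap.ker ((1 + C : Y →L[ℂ] Y) : Y →ₗ[ℂ] Y)) ∧
    FiniteDimensional ℂ (Y ⧸ LinearMap.range ((1 + C : Y →L[ℂ] Y) : Y →ₗ[ℂ] Y)) ∧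
    Module.finrank ℂ ↥(LinearMap.ker ((1 + C : Y →L[ℂ] Y) : Y →ₗ[ℂ] Y)) =
      Module.finrank ℂ (Y ⧸ LinearMap.range ((1 + C : Y →L[ℂ] Y) : Y →ₗ[ℂ] Y)) := by
  obtain ⟨F, ⟨V, hVfin, hFV⟩, hnorm⟩ := exists_finrank_approx C hC
  haveI : FiniteDimensional ℂ V := hVfin
  have hnorm' : ‖F - C‖ < 1 := by rwa [norm_sub_rev]
  set U : (Y →L[ℂ] Y)ˣ := Units.oneSub (F - C) hnorm' with hUdef
  have hUval : (U : Y →L[ℂ] Y) = 1 - (F - C) := rfl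
  set G : Y →L[ℂ] Y := (↑U⁻¹ : Y →L[ℂ] Y) * F with hGdef
  set VG : Submodule ℂ Y := Submodule.map ((↑U⁻¹ : Y →L[ℂ] Y) : Y →ₗ[ℂ] Y) V with hVGdef
  haveI : FiniteDimensional ℂ VG := Module.Finite.map _ _
  have hGmem : ∀ x, G x ∈ VG := by
    intro x
    rw [hGdef, ContinuousLinearMap.mul_apply]
    exact ⟨F x, hFV x, rfl⟩
  -- the orthogonal complement of ker G is finite dimensional
  set W₂ : Submodule ℂ Y := (LinearMap.ker (G : Y →ₗ[ℂ] Y))ᗮ with hW₂def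
  haveI : FiniteDimensional ℂ W₂ := by
    set g2 : ↥W₂ →ₗ[ℂ] ↥VG :=
      LinearMap.codRestrict VG ((G : Y →ₗ[ℂ] Y).comp W₂.subtype) (fun x => hGmem _) with hg2
    have hinj : Function.Injective g2 := by
      intro x y hxy
      have h0 : G (x : Y) = G (y : Y) := congrArg Subtype.val hxy
      have hxe : ((x : Y) - y) ∈ LinearMap.ker (G : Y →ₗ[ℂ] Y) := by
        simp only [LinearMap.mem_ker, ContinuousLinearMap.coe_coe, map_sub, h0, sub_self]
      have hxo : ((x : Y) - y) ∈ (LinearMap.ker (G : Y →ₗ[ℂ] Y))ᗮ := sub_mem x.2 y.2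
      have := ((Submodule.orthogonal_disjoint (LinearMap.ker (G : Y →ₗ[ℂ] Y))).le_bot) ⟨hxe, hxo⟩
      ext
      exact sub_eq_zero.mp (by simpa using this)
    exact FiniteDimensional.of_injective g2 hinj
  set V' : Submodule ℂ Y := VG ⊔ W₂ with hV'def
  haveI : FiniteDimensional ℂ V' := Submodule.finiteDimensional_sup VG W₂
  set T : Y →L[ℂ] Y := 1 + G with hTdef
  have hTV : ∀ v ∈ V', T v ∈ V' := by
    intro v hv
    have : T v = v + G v := by
      rw [hTdef]; simp [ContinuousLinearMap.add_apply]
    rw [this]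
    exact add_mem hv (le_sup_left (a := VG) (b := W₂) (hGmem v))
  have hTfix : ∀ y ∈ V'ᗮ, T y = y := by
    intro y hy
    haveI : CompleteSpace ↥(LinearMap.ker (G : Y →ₗ[ℂ] Y)) := (ContinuousLinearMap.isClosed_ker G).completeSpace_coe
    have h1 : V'ᗮ ≤ W₂ᗮ := Submodule.orthogonal_le le_sup_right
    have h2 : W₂ᗮ = LinearMap.ker (G : Y →ₗ[ℂ] Y) := by
      rw [hW₂def, Submodule.orthogonal_orthogonal]
    have h3 : G y = 0 := by
      have := h1 hy
      rw [h2] at this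
      exact this
    rw [hTdef]
    simp [ContinuousLinearMap.add_apply, h3]
  obtain ⟨hcl, hk, ho, heq⟩ := loc_alt T V' hTV hTfix
  -- transport along the unit U
  have hUT : (U : Y →L[ℂ] Y) * T = 1 + C := by
    rw [hTdef, mul_add, mul_one, hGdef, ← mul_assoc, U.mul_inv, one_mul, hUval]
    abel
  set eU : Y ≃L[ℂ] Y := ContinuousLinearEquiv.equivOfInverse (U : Y →L[ℂ] Y) (↑U⁻¹ : Y →L[ℂ] Y)
    (fun x => by rw [← ContinuousLinearMap.mul_apply, U.inv_mul, ContinuousLinearMap.one_apply])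
    (fun x => by rw [← ContinuousLinearMap.mul_apply, U.mul_inv, ContinuousLinearMap.one_apply])
    with heUdef
  have happ : ∀ x, (1 + C) x = (U : Y →L[ℂ] Y) (T x) := by
    intro x
    rw [← hUT, ContinuousLinearMap.mul_apply]
  have hker : LinearMap.ker ((1 + C : Y →L[ℂ] Y) : Y →ₗ[ℂ] Y) = LinearMap.ker (T : Y →ₗ[ℂ] Y) := by
    ext x
    simp only [LinearMap.mem_ker]
    simp only [ContinuousLinearMap.coe_coe]
    rw [happ x]
    exact ContinuousLinearEquiv.map_eq_zero_iff eU
  have hranmap : LinearMap.range ((1 + C : Y →L[ℂ] Y) : Y →ₗ[ℂ] Y)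
      = Submodule.map ((U : Y →L[ℂ] Y) : Y →ₗ[ℂ] Y) (LinearMap.range (T : Y →ₗ[ℂ] Y)) := by
    ext y
    simp only [LinearMap.mem_range, Submodule.mem_map]
    constructor
    · rintro ⟨x, rfl⟩
      exact ⟨T x, LinearMap.mem_range_self _ _, (happ x).symm⟩
    · rintro ⟨z, ⟨x, rfl⟩, rfl⟩
      exact ⟨x, happ x⟩
  have hcl' : IsClosed ((LinearMap.range ((1 + C : Y →L[ℂ] Y) : Y →ₗ[ℂ] Y) : Submodule ℂ Y) : Set Y) := by
    rw [hranmap]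
    have : ((Submodule.map ((U : Y →L[ℂ] Y) : Y →ₗ[ℂ] Y) (LinearMap.range (T : Y →ₗ[ℂ] Y)) : Submodule ℂ Y) : Set Y)
        = ⇑eU '' ((LinearMap.range (T : Y →ₗ[ℂ] Y) : Submodule ℂ Y) : Set Y) := by
      rw [Submodule.map_coe]
      rfl
    rw [this]
    exact (Homeomorph.isClosed_image eU.toHomeomorph).mpr hcl
  have hmapeq : Submodule.map (eU.toLinearEquiv : Y →ₗ[ℂ] Y) (LinearMap.range (T : Y →ₗ[ℂ] Y))
      = LinearMap.range ((1 + C : Y →L[ℂ] Y) : Y →ₗ[ℂ] Y) := by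
    rw [hranmap]
    ext x
    simp only [Submodule.mem_map]
    rfl
  set qe : (Y ⧸ LinearMap.range (T : Y →ₗ[ℂ] Y)) ≃ₗ[ℂ] Y ⧸ LinearMap.range ((1 + C : Y →L[ℂ] Y) : Y →ₗ[ℂ] Y) :=
    Submodule.Quotient.equiv _ _ eU.toLinearEquiv hmapeq with hqe
  obtain ⟨qo⟩ := quotient_equiv_orth (LinearMap.range (T : Y →ₗ[ℂ] Y)) hcl
  haveI hoT : FiniteDimensional ℂ ↥(LinearMap.range (T : Y →ₗ[ℂ] Y))ᗮ := ho
  haveI hq1 : FiniteDimensional ℂ (Y ⧸ LinearMap.range (T : Y →ₗ[ℂ] Y)) := Module.Finite.equiv qo.symm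
  haveI hq2 : FiniteDimensional ℂ (Y ⧸ LinearMap.range ((1 + C : Y →L[ℂ] Y) : Y →ₗ[ℂ] Y)) := Module.Finite.equiv qe
  refine ⟨by rw [hker]; exact hk, hq2, ?_⟩
  rw [hker, heq, ← qe.finrank_eq, ← qo.finrank_eq]

set_option maxHeartbeats 2000000 in
theorem index_invariance {X : Type*} [NormedAddCommGroup X] [InnerProductSpace ℂ X]
    [CompleteSpace X]
    (S S' : X →L[ℂ] Y) (hK : IsCompactOperator ⇑(S' - S))
    (hkS : FiniteDimensional ℂ ↥(LinearMap.ker (S : X →ₗ[ℂ] Y)))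
    (hkS' : FiniteDimensional ℂ ↥(LinearMap.ker (S' : X →ₗ[ℂ] Y)))
    (hrS : IsClosed ((LinearMap.range (S : X →ₗ[ℂ] Y) : Submodule ℂ Y) : Set Y))
    (hrS' : IsClosed ((LinearMap.range (S' : X →ₗ[ℂ] Y) : Submodule ℂ Y) : Set Y))
    (hcS : FiniteDimensional ℂ ↥(LinearMap.range (S : X →ₗ[ℂ] Y))ᗮ)
    (hcS' : FiniteDimensional ℂ ↥(LinearMap.range (S' : X →ₗ[ℂ] Y))ᗮ) :
    Module.finrank ℂ ↥(LinearMap.ker (S : X →ₗ[ℂ] Y)) + Module.finrank ℂ ↥(LinearMap.range (S' : X →ₗ[ℂ] Y))ᗮ =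
      Module.finrank ℂ ↥(LinearMap.ker (S' : X →ₗ[ℂ] Y)) + Module.finrank ℂ ↥(LinearMap.range (S : X →ₗ[ℂ] Y))ᗮ := by
  haveI : CompleteSpace ↥(LinearMap.range (S : X →ₗ[ℂ] Y)) := hrS.completeSpace_coe
  haveI : CompleteSpace ↥(LinearMap.ker (S : X →ₗ[ℂ] Y)) := FiniteDimensional.complete ℂ _
  set X₁ : Submodule ℂ X := (LinearMap.ker (S : X →ₗ[ℂ] Y))ᗮ with hX₁def
  haveI : CompleteSpace ↥X₁ := (Submodule.isClosed_orthogonal _).completeSpace_coe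
  -- the restricted isomorphism X₁ ≃ range S
  set f₀ : ↥X₁ →L[ℂ] ↥(LinearMap.range (S : X →ₗ[ℂ] Y)) :=
    ContinuousLinearMap.codRestrict (S.comp X₁.subtypeL) _
      (fun x => LinearMap.mem_range_self _ _) with hf₀def
  have hf₀inj : LinearMap.ker (f₀ : ↥X₁ →ₗ[ℂ] ↥(LinearMap.range (S : X →ₗ[ℂ] Y))) = ⊥ := by
    rw [LinearMap.ker_eq_bot']
    intro x hx
    have h1 : S (x : X) = 0 := congrArg Subtype.val hx
    have h2 : (x : X) ∈ LinearMap.ker (S : X →ₗ[ℂ] Y) := h1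
    have h3 := (Submodule.orthogonal_disjoint (LinearMap.ker (S : X →ₗ[ℂ] Y))).le_bot ⟨h2, x.2⟩
    ext
    simpa using h3
  have hf₀surj : LinearMap.range (f₀ : ↥X₁ →ₗ[ℂ] ↥(LinearMap.range (S : X →ₗ[ℂ] Y))) = ⊤ := by
    rw [LinearMap.range_eq_top]
    rintro ⟨y, x, rfl⟩
    refine ⟨⟨x - (orthogonalProjection (LinearMap.ker (S : X →ₗ[ℂ] Y)) x : X),
      Submodule.sub_starProjection_mem_orthogonal x⟩, ?_⟩
    ext
    show S (x - (orthogonalProjection (LinearMap.ker (S : X →ₗ[ℂ] Y)) x : X)) = S x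
    rw [map_sub, show S ((orthogonalProjection (LinearMap.ker (S : X →ₗ[ℂ] Y)) x : X)) = 0 from (orthogonalProjection (LinearMap.ker (S : X →ₗ[ℂ] Y)) x).2, sub_zero]
  set eS : ↥X₁ ≃L[ℂ] ↥(LinearMap.range (S : X →ₗ[ℂ] Y)) :=
    ContinuousLinearEquiv.ofBijective f₀ hf₀inj hf₀surj with heSdef
  set Q : Y →L[ℂ] X := X₁.subtypeL.comp
    ((eS.symm : ↥(LinearMap.range (S : X →ₗ[ℂ] Y)) →L[ℂ] ↥X₁).comp
      (orthogonalProjection (LinearMap.range (S : X →ₗ[ℂ] Y)))) with hQdef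
  have hQmem : ∀ y, Q y ∈ X₁ := fun y => (eS.symm _).2
  have heSapp : ∀ x : ↥X₁, (eS x : Y) = S (x : X) := fun x => rfl
  have hSQ : ∀ y, S (Q y) = (orthogonalProjection (LinearMap.range (S : X →ₗ[ℂ] Y)) y : Y) := by
    intro y
    have h1 : eS (eS.symm (orthogonalProjection (LinearMap.range (S : X →ₗ[ℂ] Y)) y))
        = orthogonalProjection (LinearMap.range (S : X →ₗ[ℂ] Y)) y := eS.apply_symm_apply _
    have h2 : (eS (eS.symm (orthogonalProjection (LinearMap.range (S : X →ₗ[ℂ] Y)) y)) : Y) = S (Q y) := rfl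
    rw [← h2, h1]
  have hQzero : ∀ y, Q y = 0 ↔ y ∈ (LinearMap.range (S : X →ₗ[ℂ] Y))ᗮ := by
    intro y
    constructor
    · intro h
      have h1 : (eS.symm (orthogonalProjection (LinearMap.range (S : X →ₗ[ℂ] Y)) y) : X) = 0 := h
      have h2 : eS.symm (orthogonalProjection (LinearMap.range (S : X →ₗ[ℂ] Y)) y) = 0 := by
        exact Subtype.ext h1
      have h3 : orthogonalProjection (LinearMap.range (S : X →ₗ[ℂ] Y)) y = 0 :=
        (ContinuousLinearEquiv.map_eq_zero_iff eS.symm).mp h2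
      exact Submodule.orthogonalProjectionOnto_eq_zero_iff.mp h3
    · intro h
      have h3 : orthogonalProjection (LinearMap.range (S : X →ₗ[ℂ] Y)) y = 0 :=
        Submodule.orthogonalProjectionOnto_eq_zero_iff.mpr h
      show (X₁.subtypeL) ((eS.symm : ↥(LinearMap.range (S : X →ₗ[ℂ] Y)) →L[ℂ] ↥X₁)
        ((orthogonalProjection (LinearMap.range (S : X →ₗ[ℂ] Y))) y)) = 0
      rw [h3]
      rw [map_zero, map_zero]
  have hQS : ∀ x : X, x ∈ X₁ → Q (S x) = x := by
    intro x hx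
    have h1 : orthogonalProjection (LinearMap.range (S : X →ₗ[ℂ] Y)) (S x)
        = ⟨S x, LinearMap.mem_range_self _ _⟩ :=
      orthogonalProjection_mem_subspace_eq_self ⟨S x, LinearMap.mem_range_self _ _⟩
    have h2 : eS ⟨x, hx⟩ = ⟨S x, LinearMap.mem_range_self _ _⟩ := rfl
    have h3 : eS.symm ⟨S x, LinearMap.mem_range_self _ _⟩ = ⟨x, hx⟩ := by
      rw [← h2, eS.symm_apply_apply]
    have h4 : Q (S x) = ((eS.symm ⟨S x, LinearMap.mem_range_self _ _⟩ : ↥X₁) : X) := by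
      show (X₁.subtypeL) ((eS.symm : ↥(LinearMap.range (S : X →ₗ[ℂ] Y)) →L[ℂ] ↥X₁)
        ((orthogonalProjection (LinearMap.range (S : X →ₗ[ℂ] Y))) (S x))) = _
      rw [h1]
      rfl
    rw [h4, h3]
  -- the compact perturbation of the identity
  set R : Y →L[ℂ] Y := S'.comp Q with hRdef
  set Cc : Y →L[ℂ] Y := R - 1 with hCcdef
  have hCdecomp : Cc = (S' - S).comp Q + (S.comp Q - 1) := by
    ext y
    show R y - y = ((S' - S).comp Q) y + (S.comp Q - 1) y
    have hy : R y = S' (Q y) := rfl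
    simp only [ContinuousLinearMap.sub_apply, ContinuousLinearMap.add_apply,
      ContinuousLinearMap.comp_apply, ContinuousLinearMap.one_apply, hy]
    abel
  have h1c : IsCompactOperator ⇑((S' - S).comp Q) := by
    rw [ContinuousLinearMap.coe_comp']
    exact hK.comp_clm Q
  have h2c : IsCompactOperator ⇑(S.comp Q - 1) := by
    refine compact_of_range_le_findim _ ((LinearMap.range (S : X →ₗ[ℂ] Y))ᗮ) (fun y => ?_)
    have : (S.comp Q - 1) y = -(y - (orthogonalProjection (LinearMap.range (S : X →ₗ[ℂ] Y)) y : Y)) := by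
      simp only [ContinuousLinearMap.sub_apply, ContinuousLinearMap.comp_apply,
        ContinuousLinearMap.one_apply, hSQ y]
      abel
    rw [this]
    exact neg_mem (Submodule.sub_starProjection_mem_orthogonal y)
  have hCc : IsCompactOperator ⇑Cc := by
    rw [hCdecomp, ContinuousLinearMap.coe_add']
    exact h1c.add h2c
  have hReq : (1 : Y →L[ℂ] Y) + Cc = R := by rw [hCcdef]; abel
  obtain ⟨hkR, hqR, heqR⟩ := fredholm_alternative Cc hCc
  rw [hReq] at hkR hqR heqR
  haveI := hkR
  haveI := hqR
  -- counting map 1 : kernel of R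
  set ψQ : ↥(LinearMap.ker (R : Y →ₗ[ℂ] Y)) →ₗ[ℂ] X :=
    Q.toLinearMap.comp (LinearMap.ker (R : Y →ₗ[ℂ] Y)).subtype with hψQdef
  have hkerQ : LinearMap.ker (Q : Y →ₗ[ℂ] X) = (LinearMap.range (S : X →ₗ[ℂ] Y))ᗮ := by
    ext y
    rw [LinearMap.mem_ker]
    exact hQzero y
  have hQkerR : (LinearMap.range (S : X →ₗ[ℂ] Y))ᗮ ≤ LinearMap.ker (R : Y →ₗ[ℂ] Y) := by
    intro y hy
    rw [← hkerQ] at hy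
    have h0 : Q y = 0 := hy
    show S' (Q y) = 0
    rw [h0, map_zero]
  have hψQker : LinearMap.ker ψQ
      = Submodule.comap (LinearMap.ker (R : Y →ₗ[ℂ] Y)).subtype ((LinearMap.range (S : X →ₗ[ℂ] Y))ᗮ) := by
    ext x
    simp only [hψQdef, LinearMap.mem_ker, LinearMap.comp_apply, Submodule.mem_comap,
      ← hkerQ]
  have hψQrange : LinearMap.range ψQ = LinearMap.ker (S' : X →ₗ[ℂ] Y) ⊓ X₁ := by
    ext x
    simp only [LinearMap.mem_range, Submodule.mem_inf]
    constructor
    · rintro ⟨⟨y, hy⟩, rfl⟩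
      refine ⟨?_, hQmem y⟩
      show S' (Q y) = 0
      exact hy
    · rintro ⟨hx1, hx2⟩
      refine ⟨⟨S x, ?_⟩, ?_⟩
      · show S' (Q (S x)) = 0
        rw [hQS x hx2]
        exact hx1
      · show Q (S x) = x
        exact hQS x hx2
  have E1 := LinearMap.finrank_range_add_finrank_ker ψQ
  rw [hψQrange, hψQker] at E1
  rw [(Submodule.comapSubtypeEquivOfLe hQkerR).finrank_eq] at E1
  -- counting map 2 : projection of ker S' to ker S
  set ψP : ↥(LinearMap.ker (S' : X →ₗ[ℂ] Y)) →ₗ[ℂ] ↥(LinearMap.ker (S : X →ₗ[ℂ] Y)) :=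
    (orthogonalProjection (LinearMap.ker (S : X →ₗ[ℂ] Y))).toLinearMap.comp
      (LinearMap.ker (S' : X →ₗ[ℂ] Y)).subtype with hψPdef
  have hψPker : LinearMap.ker ψP
      = Submodule.comap (LinearMap.ker (S' : X →ₗ[ℂ] Y)).subtype (LinearMap.ker (S' : X →ₗ[ℂ] Y) ⊓ X₁) := by
    ext x
    simp only [hψPdef, LinearMap.mem_ker, LinearMap.comp_apply, Submodule.mem_comap,
      Submodule.mem_inf]
    constructor
    · intro h
      exact ⟨x.2, Submodule.orthogonalProjectionOnto_eq_zero_iff.mp h⟩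
    · intro h
      exact Submodule.orthogonalProjectionOnto_eq_zero_iff.mpr h.2
  have E2 := LinearMap.finrank_range_add_finrank_ker ψP
  rw [hψPker, (Submodule.comapSubtypeEquivOfLe
    (inf_le_left : LinearMap.ker (S' : X →ₗ[ℂ] Y) ⊓ X₁ ≤ LinearMap.ker (S' : X →ₗ[ℂ] Y))).finrank_eq] at E2
  -- counting map 3 : cokernel comparison
  have hS'X₁ : ∀ x ∈ X₁, S' x ∈ LinearMap.range (R : Y →ₗ[ℂ] Y) := by
    intro x hx
    refine ⟨S x, ?_⟩
    show S' (Q (S x)) = S' x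
    rw [hQS x hx]
  set θ : ↥(LinearMap.ker (S : X →ₗ[ℂ] Y)) →ₗ[ℂ] (Y ⧸ LinearMap.range (R : Y →ₗ[ℂ] Y)) :=
    (LinearMap.range (R : Y →ₗ[ℂ] Y)).mkQ.comp (S'.toLinearMap.comp (LinearMap.ker (S : X →ₗ[ℂ] Y)).subtype) with hθdef
  have hθrange : LinearMap.range θ
      = Submodule.map (LinearMap.range (R : Y →ₗ[ℂ] Y)).mkQ (LinearMap.range (S' : X →ₗ[ℂ] Y)) := by
    apply le_antisymm
    · rintro z ⟨x, rfl⟩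
      exact ⟨S' (x : X), LinearMap.mem_range_self _ _, rfl⟩
    · rintro z ⟨w, ⟨x, rfl⟩, rfl⟩
      set k : ↥(LinearMap.ker (S : X →ₗ[ℂ] Y)) := orthogonalProjection (LinearMap.ker (S : X →ₗ[ℂ] Y)) x with hk
      refine ⟨k, ?_⟩
      show (LinearMap.range (R : Y →ₗ[ℂ] Y)).mkQ (S' (k : X)) = (LinearMap.range (R : Y →ₗ[ℂ] Y)).mkQ (S' x)
      rw [Submodule.mkQ_apply, Submodule.mkQ_apply, Submodule.Quotient.eq]
      have h5 : S' (k : X) - S' x = -(S' (x - (k : X))) := by rw [map_sub]; abel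
      rw [h5]
      exact neg_mem (hS'X₁ _ (Submodule.sub_starProjection_mem_orthogonal x))
  have hθker : LinearMap.ker θ = LinearMap.range ψP := by
    apply le_antisymm
    · intro x hx
      have hx' : S' (x : X) ∈ LinearMap.range (R : Y →ₗ[ℂ] Y) := by
        have := hx
        rw [LinearMap.mem_ker] at this
        have h6 : (LinearMap.range (R : Y →ₗ[ℂ] Y)).mkQ (S' (x : X)) = 0 := this
        rwa [Submodule.mkQ_apply, Submodule.Quotient.mk_eq_zero] at h6
      obtain ⟨y, hy⟩ := hx'
      have hz : ((x : X) - Q y) ∈ LinearMap.ker (S' : X →ₗ[ℂ] Y) := by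
        rw [LinearMap.mem_ker, map_sub]
        have h7 : S' (Q y) = R y := rfl
        simp only [ContinuousLinearMap.coe_coe] at hy ⊢
        rw [h7, hy, sub_self]
      refine ⟨⟨(x : X) - Q y, hz⟩, ?_⟩
      show orthogonalProjection (LinearMap.ker (S : X →ₗ[ℂ] Y)) ((x : X) - Q y) = x
      rw [map_sub]
      rw [orthogonalProjection_mem_subspace_eq_self x]
      rw [Submodule.orthogonalProjectionOnto_apply_of_mem_orthogonal (hQmem y)]
      rw [sub_zero]
    · rintro x ⟨z, rfl⟩
      rw [LinearMap.mem_ker]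
      show (LinearMap.range (R : Y →ₗ[ℂ] Y)).mkQ
        (S' ((orthogonalProjection (LinearMap.ker (S : X →ₗ[ℂ] Y)) (z : X) : X))) = 0
      rw [Submodule.mkQ_apply, Submodule.Quotient.mk_eq_zero]
      have h8 : S' ((orthogonalProjection (LinearMap.ker (S : X →ₗ[ℂ] Y)) (z : X) : X))
          = S' (z : X) - S' ((z : X) - (orthogonalProjection (LinearMap.ker (S : X →ₗ[ℂ] Y)) (z : X) : X)) := by
        rw [map_sub]
        abel
      rw [h8]
      have h9 : S' (z : X) = 0 := z.2
      rw [h9, zero_sub]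
      exact neg_mem (hS'X₁ _ (Submodule.sub_starProjection_mem_orthogonal (z : X)))
  have E3 := LinearMap.finrank_range_add_finrank_ker θ
  rw [hθrange, hθker] at E3
  -- tower for the quotient
  have hle : LinearMap.range (R : Y →ₗ[ℂ] Y) ≤ LinearMap.range (S' : X →ₗ[ℂ] Y) := by
    rintro y ⟨x, rfl⟩
    exact ⟨Q x, rfl⟩
  have E4 := Submodule.finrank_quotient_add_finrank
    (Submodule.map (LinearMap.range (R : Y →ₗ[ℂ] Y)).mkQ (LinearMap.range (S' : X →ₗ[ℂ] Y)))
  have E5 := (Submodule.quotientQuotientEquivQuotient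
    (LinearMap.range (R : Y →ₗ[ℂ] Y)) (LinearMap.range (S' : X →ₗ[ℂ] Y)) hle).finrank_eq
  obtain ⟨qS'⟩ := quotient_equiv_orth (LinearMap.range (S' : X →ₗ[ℂ] Y)) hrS'
  have E6 := qS'.finrank_eq
  omega


end CliffTrivAux

set_option maxHeartbeats 4000000 in
/-- Hilbert-space case of Lemma 4.1, `cliff_triv`.
`H` is a ℤ₂-graded Hilbert space with grading `γ` (a bounded self-adjoint unitary), with
even part `ker(γ − 1)` and odd part `ker(γ + 1)`.  `D` is an odd self-adjoint Fredholm
operator with dense domain `W` (abstract encoding: complete normed space `W` with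
injective dense inclusion `ι : W →L[ℂ] H` carrying the graph norm; self-adjointness =
symmetry plus the bounded resolvents `Rp = (D+i)⁻¹`, `Rm = (D−i)⁻¹`; oddness via
`γW : W → W` covering `γ` with `D ∘ γW = −γ ∘ D`; Fredholm = finite-dimensional kernel
and closed range).  `e` is a bounded self-adjoint unitary, odd w.r.t. `γ`, preserving the
domain (via `eW` covering `e`), whose graded anticommutator with `D` extends to a bounded
operator `A` with `A ∘ (D+i)⁻¹` compact.  Then
`dim(ker D ∩ H⁰) = dim(ker D ∩ H¹)`, i.e. the index of `D₊` is zero. -/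
theorem cliff_triv
    {H : Type*} [NormedAddCommGroup H] [InnerProductSpace ℂ H] [CompleteSpace H]
    {W : Type*} [NormedAddCommGroup W] [NormedSpace ℂ W] [CompleteSpace W]
    (ι : W →L[ℂ] H) (hι_inj : Function.Injective ι) (hι_dense : DenseRange ι)
    (γ : H →L[ℂ] H) (hγ_sa : IsSelfAdjoint γ) (hγ_unit : ∀ ψ : H, γ (γ ψ) = ψ)
    (D : W →L[ℂ] H)
    (h_graph : ∀ ξ : W, ‖ξ‖ ^ 2 = ‖ι ξ‖ ^ 2 + ‖D ξ‖ ^ 2)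
    (h_symm : ∀ ξ η : W, (inner ℂ (D ξ) (ι η) : ℂ) = inner ℂ (ι ξ) (D η))
    (Rp Rm : H →L[ℂ] W)
    (hRp1 : ∀ ψ : H, D (Rp ψ) + Complex.I • ι (Rp ψ) = ψ)
    (hRp2 : ∀ ξ : W, Rp (D ξ + Complex.I • ι ξ) = ξ)
    (hRm1 : ∀ ψ : H, D (Rm ψ) - Complex.I • ι (Rm ψ) = ψ)
    (hRm2 : ∀ ξ : W, Rm (D ξ - Complex.I • ι ξ) = ξ)
    (γW : W →L[ℂ] W) (hγW : ∀ ξ : W, ι (γW ξ) = γ (ι ξ))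
    (h_odd : ∀ ξ : W, D (γW ξ) = - γ (D ξ))
    (h_ker_fin : FiniteDimensional ℂ ↥(LinearMap.ker (D : W →ₗ[ℂ] H)))
    (h_ran_closed : IsClosed ((LinearMap.range (D : W →ₗ[ℂ] H) : Submodule ℂ H) : Set H))
    (e : H →L[ℂ] H) (he_sa : IsSelfAdjoint e) (he_unit : ∀ ψ : H, e (e ψ) = ψ)
    (he_odd : ∀ ψ : H, e (γ ψ) = - γ (e ψ))
    (eW : W →L[ℂ] W) (heW : ∀ ξ : W, ι (eW ξ) = e (ι ξ))
    (A : H →L[ℂ] H)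
    (hA : ∀ ξ : W, A (ι ξ) = D (eW ξ) + e (D ξ))
    (hA_cpt : IsCompactOperator ⇑(A.comp (ι.comp Rp))) :
    Module.finrank ℂ ↥(LinearMap.ker (D : W →ₗ[ℂ] H) ⊓ LinearMap.ker ((γ.comp ι - ι : W →L[ℂ] H) : W →ₗ[ℂ] H)) =
    Module.finrank ℂ ↥(LinearMap.ker (D : W →ₗ[ℂ] H) ⊓ LinearMap.ker ((γ.comp ι + ι : W →L[ℂ] H) : W →ₗ[ℂ] H)) := by
  classical
  haveI := h_ker_fin
  -- W is a Hilbert space for the graph norm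
  have hpar : ∀ x y : W, ‖x + y‖ * ‖x + y‖ + ‖x - y‖ * ‖x - y‖
      = 2 * (‖x‖ * ‖x‖ + ‖y‖ * ‖y‖) := by
    intro x y
    have h1 := h_graph (x + y)
    have h2 := h_graph (x - y)
    have h3 := h_graph x
    have h4 := h_graph y
    have p1 := parallelogram_law_with_norm ℂ (ι x) (ι y)
    have p2 := parallelogram_law_with_norm ℂ (D x) (D y)
    rw [map_add, map_add] at h1
    rw [map_sub, map_sub] at h2
    simp only [pow_two] at h1 h2 h3 h4
    linarith
  letI instW : InnerProductSpace ℂ W := InnerProductSpace.ofNorm ℂ hpar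
  -- involutions
  have hγ2 : ∀ ξ : W, γW (γW ξ) = ξ := fun ξ => hι_inj (by rw [hγW, hγW, hγ_unit])
  have he2 : ∀ ξ : W, eW (eW ξ) = ξ := fun ξ => hι_inj (by rw [heW, heW, he_unit])
  have hγe : ∀ ψ : H, γ (e ψ) = - e (γ ψ) := fun ψ => by rw [he_odd ψ, neg_neg]
  -- even and odd parts
  set Wev : Submodule ℂ W := LinearMap.ker ((γ.comp ι - ι : W →L[ℂ] H) : W →ₗ[ℂ] H) with hWevdef
  set Wod : Submodule ℂ W := LinearMap.ker ((γ.comp ι + ι : W →L[ℂ] H) : W →ₗ[ℂ] H) with hWoddef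
  have hWev_mem : ∀ ξ : W, ξ ∈ Wev ↔ γ (ι ξ) = ι ξ := by
    intro ξ
    rw [hWevdef, LinearMap.mem_ker]
    have h1 : (γ.comp ι - ι) ξ = γ (ι ξ) - ι ξ := rfl
    simp only [ContinuousLinearMap.coe_coe]
    rw [h1, sub_eq_zero]
  have hWod_mem : ∀ ξ : W, ξ ∈ Wod ↔ γ (ι ξ) = -(ι ξ) := by
    intro ξ
    rw [hWoddef, LinearMap.mem_ker]
    have h1 : (γ.comp ι + ι) ξ = γ (ι ξ) + ι ξ := rfl
    simp only [ContinuousLinearMap.coe_coe]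
    rw [h1, add_eq_zero_iff_eq_neg]
  set Hod : Submodule ℂ H := LinearMap.ker ((γ + 1 : H →L[ℂ] H) : H →ₗ[ℂ] H) with hHoddef
  have hHod_mem : ∀ ψ : H, ψ ∈ Hod ↔ γ ψ = -ψ := by
    intro ψ
    rw [hHoddef, LinearMap.mem_ker]
    have h1 : (γ + 1) ψ = γ ψ + ψ := rfl
    simp only [ContinuousLinearMap.coe_coe]
    rw [h1, add_eq_zero_iff_eq_neg]
  have hHod_closed : IsClosed ((Hod : Submodule ℂ H) : Set H) :=
    ContinuousLinearMap.isClosed_ker _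
  set Hev : Submodule ℂ H := LinearMap.ker ((γ - 1 : H →L[ℂ] H) : H →ₗ[ℂ] H) with hHevdef
  have hHev_mem : ∀ ψ : H, ψ ∈ Hev ↔ γ ψ = ψ := by
    intro ψ
    rw [hHevdef, LinearMap.mem_ker]
    have h1 : (γ - 1) ψ = γ ψ - ψ := rfl
    simp only [ContinuousLinearMap.coe_coe]
    rw [h1, sub_eq_zero]
  have hHev_closed : IsClosed ((Hev : Submodule ℂ H) : Set H) :=
    ContinuousLinearMap.isClosed_ker _
  -- orthogonality of the grading, vanishing of mixed terms
  have hzero_of_neg : ∀ p : H, p = -p → p = 0 := by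
    intro p h
    have h2 : (2:ℂ) • p = 0 := by rw [two_smul]; nth_rewrite 1 [h]; abel
    simpa using smul_eq_zero.mp h2
  have hevod : ∀ p q : H, γ p = p → γ q = -q → (inner ℂ p q : ℂ) = 0 := by
    intro p q hp hq
    have h1 : (inner ℂ p q : ℂ) = inner ℂ (γ p) q := by rw [hp]
    have h2 : (inner ℂ (γ p) q : ℂ) = inner ℂ p (γ q) := hγ_sa.isSymmetric.apply_clm p q
    rw [hq, inner_neg_right] at h2
    have h3 : (inner ℂ p q : ℂ) = -(inner ℂ p q : ℂ) := h1.trans h2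
    have h4 : ((inner ℂ p q : ℂ) + inner ℂ p q) = 0 := by rw [eq_neg_iff_add_eq_zero] at h3; exact h3
    have h5 : (2:ℂ) * inner ℂ p q = 0 := by rw [two_mul]; exact h4
    have := mul_eq_zero.mp h5
    rcases this with h | h
    · norm_num at h
    · exact h
  -- graded decomposition in W
  have hdecompW : ∀ ξ : W, ∃ a b : W, a ∈ Wev ∧ b ∈ Wod ∧ ξ = a + b := by
    intro ξ
    refine ⟨(2:ℂ)⁻¹ • (ξ + γW ξ), (2:ℂ)⁻¹ • (ξ - γW ξ), ?_, ?_, ?_⟩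
    · rw [hWev_mem, map_smul, map_smul, map_add, map_add, hγW, hγ_unit]
      rw [add_comm]
    · rw [hWod_mem, map_smul, map_smul, map_sub, map_sub, hγW, hγ_unit]
      rw [← smul_neg, neg_sub]
    · module
  -- behaviour of D on the graded parts
  have hγWev : ∀ ξ : W, ξ ∈ Wev → γW ξ = ξ :=
    fun ξ hξ => hι_inj (by rw [hγW]; exact (hWev_mem ξ).mp hξ)
  have hγWod : ∀ ξ : W, ξ ∈ Wod → γW ξ = -ξ :=
    fun ξ hξ => hι_inj (by rw [hγW, map_neg]; exact (hWod_mem ξ).mp hξ)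
  have hDev : ∀ ξ : W, ξ ∈ Wev → γ (D ξ) = -(D ξ) := by
    intro ξ hξ
    have h1 := h_odd ξ
    rw [hγWev ξ hξ] at h1
    have h2 : γ (D ξ) = γ (-γ (D ξ)) := by rw [← h1]
    rw [map_neg, hγ_unit] at h2
    exact h2
  have hDod : ∀ ξ : W, ξ ∈ Wod → γ (D ξ) = D ξ := by
    intro ξ hξ
    have h1 := h_odd ξ
    rw [hγWod ξ hξ, map_neg] at h1
    have h2 : D ξ = γ (D ξ) := by
      have := congrArg Neg.neg h1
      rwa [neg_neg, neg_neg] at this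
    exact h2.symm
  have heWev : ∀ ξ : W, ξ ∈ Wev → eW ξ ∈ Wod := by
    intro ξ hξ
    rw [hWod_mem, heW, hγe, (hWev_mem ξ).mp hξ]
  have heWod : ∀ ξ : W, ξ ∈ Wod → eW ξ ∈ Wev := by
    intro ξ hξ
    rw [hWev_mem, heW, hγe, (hWod_mem ξ).mp hξ, map_neg, neg_neg]
  -- instances
  haveI hWev_cs : CompleteSpace ↥Wev := (ContinuousLinearMap.isClosed_ker _).completeSpace_coe
  haveI hHod_cs : CompleteSpace ↥Hod := hHod_closed.completeSpace_coe
  -- the graded operators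
  have hSmem : ∀ x : ↥Wev, D ((x : W)) ∈ Hod := fun x => (hHod_mem _).mpr (hDev _ x.2)
  set S : ↥Wev →L[ℂ] ↥Hod :=
    ContinuousLinearMap.codRestrict (D.comp Wev.subtypeL) Hod (fun x => hSmem x) with hSdef
  set B : W →L[ℂ] H := -(e.comp (D.comp eW)) with hBdef
  have hBapp : ∀ ξ : W, B ξ = -(e (D (eW ξ))) := fun ξ => rfl
  have hBmem : ∀ x : ↥Wev, B ((x : W)) ∈ Hod := by
    intro x
    rw [hHod_mem, hBapp, map_neg, hγe, hDod _ (heWev _ x.2)]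
  set S' : ↥Wev →L[ℂ] ↥Hod :=
    ContinuousLinearMap.codRestrict (B.comp Wev.subtypeL) Hod (fun x => hBmem x) with hS'def
  have hSval : ∀ x : ↥Wev, (S x : H) = D (x : W) := fun x => rfl
  have hS'val : ∀ x : ↥Wev, (S' x : H) = B (x : W) := fun x => rfl
  -- compactness of the difference
  have hAι : IsCompactOperator ⇑(A.comp ι) := by
    have hcomp : (A.comp (ι.comp Rp)).comp (D + Complex.I • ι) = A.comp ι := by
      ext ξ
      simp only [ContinuousLinearMap.comp_apply, ContinuousLinearMap.add_apply,
        ContinuousLinearMap.smul_apply]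
      rw [hRp2 ξ]
    rw [← hcomp, ContinuousLinearMap.coe_comp']
    exact hA_cpt.comp_clm _
  have hBD : B - D = -(e.comp (A.comp ι)) := by
    ext ξ
    have h1 : (B - D) ξ = -(e (D (eW ξ))) - D ξ := rfl
    have h2 : (-(e.comp (A.comp ι))) ξ = -(e (A (ι ξ))) := rfl
    rw [h1, h2, hA ξ, map_add, he_unit]
    abel
  have hKcpt : IsCompactOperator ⇑(S' - S) := by
    have h1 : IsCompactOperator ⇑(e.comp (A.comp ι)) := by
      rw [ContinuousLinearMap.coe_comp']
      exact hAι.clm_comp e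
    have h2 : IsCompactOperator ⇑(B - D) := by rw [hBD]; exact h1.neg
    have h3 : IsCompactOperator ⇑((B - D).comp Wev.subtypeL) := by
      rw [ContinuousLinearMap.coe_comp']
      exact h2.comp_clm _
    have h4 : ⇑(S' - S) = Set.codRestrict ⇑((B - D).comp Wev.subtypeL) Hod
        (fun x => sub_mem (hBmem x) (hSmem x)) := by
      funext x
      apply Subtype.ext
      show ((S' - S) x : H) = (B - D) ((x : W))
      have h5 : ((S' - S) x : H) = (S' x : H) - (S x : H) := rfl
      rw [h5, hS'val, hSval]
      rfl
    rw [h4]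
    exact h3.codRestrict _ hHod_closed
  -- kernels
  have hkerS_eq : LinearMap.ker (S : ↥Wev →ₗ[ℂ] ↥Hod)
      = Submodule.comap Wev.subtype (LinearMap.ker (D : W →ₗ[ℂ] H) ⊓ Wev) := by
    ext x
    simp only [LinearMap.mem_ker, Submodule.mem_comap, Submodule.mem_inf]
    constructor
    · intro h
      exact ⟨congrArg Subtype.val h, x.2⟩
    · intro h
      exact Subtype.ext h.1
  haveI : FiniteDimensional ℂ ↥(LinearMap.ker (D : W →ₗ[ℂ] H) ⊓ Wev) :=
    Submodule.finiteDimensional_of_le inf_le_left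
  haveI : FiniteDimensional ℂ ↥(LinearMap.ker (D : W →ₗ[ℂ] H) ⊓ Wod) :=
    Submodule.finiteDimensional_of_le inf_le_left
  have hnS : Module.finrank ℂ ↥(LinearMap.ker (S : ↥Wev →ₗ[ℂ] ↥Hod))
      = Module.finrank ℂ ↥(LinearMap.ker (D : W →ₗ[ℂ] H) ⊓ Wev) := by
    rw [hkerS_eq]
    exact (Submodule.comapSubtypeEquivOfLe
      (inf_le_right : LinearMap.ker (D : W →ₗ[ℂ] H) ⊓ Wev ≤ Wev)).finrank_eq
  haveI hkSfin : FiniteDimensional ℂ ↥(LinearMap.ker (S : ↥Wev →ₗ[ℂ] ↥Hod)) := by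
    rw [hkerS_eq]
    exact Module.Finite.equiv (Submodule.comapSubtypeEquivOfLe
      (inf_le_right : LinearMap.ker (D : W →ₗ[ℂ] H) ⊓ Wev ≤ Wev)).symm
  -- kernel of S' via eW
  have hkerS'_char : ∀ x : ↥Wev, S' x = 0 ↔ D (eW ((x : W))) = 0 := by
    intro x
    constructor
    · intro h
      have h1 : B ((x : W)) = 0 := congrArg Subtype.val h
      rw [hBapp] at h1
      have h3 : e (D (eW ((x : W)))) = 0 := by
        have h4 := congrArg Neg.neg h1
        rwa [neg_neg, neg_zero] at h4
      have h5 := congrArg e h3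
      rwa [he_unit, map_zero] at h5
    · intro h
      apply Subtype.ext
      show B ((x : W)) = 0
      rw [hBapp, h, map_zero, neg_zero]
  set φfun : ↥(LinearMap.ker (S' : ↥Wev →ₗ[ℂ] ↥Hod)) → ↥(LinearMap.ker (D : W →ₗ[ℂ] H) ⊓ Wod) := fun x =>
    ⟨eW (((x : ↥Wev) : W)),
      ⟨(hkerS'_char _).mp x.2, heWev _ (x : ↥Wev).2⟩⟩ with hφfun
  set ψfun : ↥(LinearMap.ker (D : W →ₗ[ℂ] H) ⊓ Wod) → ↥(LinearMap.ker (S' : ↥Wev →ₗ[ℂ] ↥Hod)) := fun y =>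
    ⟨⟨eW ((y : W)), heWod _ y.2.2⟩, by
      rw [LinearMap.mem_ker, ContinuousLinearMap.coe_coe, hkerS'_char]
      show D (eW (eW ((y : W)))) = 0
      rw [he2]
      exact y.2.1⟩ with hψfun
  set φ : ↥(LinearMap.ker (S' : ↥Wev →ₗ[ℂ] ↥Hod)) ≃ₗ[ℂ] ↥(LinearMap.ker (D : W →ₗ[ℂ] H) ⊓ Wod) :=
    { toFun := φfun
      invFun := ψfun
      map_add' := by
        intro x y
        apply Subtype.ext
        show eW ((((x + y) : ↥(LinearMap.ker (S' : ↥Wev →ₗ[ℂ] ↥Hod))) : ↥Wev) : W) = _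
        rw [show ((((x + y) : ↥(LinearMap.ker (S' : ↥Wev →ₗ[ℂ] ↥Hod))) : ↥Wev) : W)
          = (((x : ↥Wev) : W)) + (((y : ↥Wev) : W)) from rfl, map_add]
        rfl
      map_smul' := by
        intro c x
        apply Subtype.ext
        show eW ((((c • x) : ↥(LinearMap.ker (S' : ↥Wev →ₗ[ℂ] ↥Hod))) : ↥Wev) : W) = _
        rw [show ((((c • x) : ↥(LinearMap.ker (S' : ↥Wev →ₗ[ℂ] ↥Hod))) : ↥Wev) : W)
          = c • (((x : ↥Wev) : W)) from rfl, map_smul]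
        rfl
      left_inv := by
        intro x
        apply Subtype.ext
        apply Subtype.ext
        show eW (eW (((x : ↥Wev) : W))) = ((x : ↥Wev) : W)
        exact he2 _
      right_inv := by
        intro y
        apply Subtype.ext
        show eW (eW ((y : W))) = (y : W)
        exact he2 _ } with hφdef
  have hnS' : Module.finrank ℂ ↥(LinearMap.ker (S' : ↥Wev →ₗ[ℂ] ↥Hod))
      = Module.finrank ℂ ↥(LinearMap.ker (D : W →ₗ[ℂ] H) ⊓ Wod) := φ.finrank_eq
  haveI hkS'fin : FiniteDimensional ℂ ↥(LinearMap.ker (S' : ↥Wev →ₗ[ℂ] ↥Hod)) := Module.Finite.equiv φ.symm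
  -- ranges
  have hMWev_eq : Submodule.map (D : W →ₗ[ℂ] H) Wev = LinearMap.range (D : W →ₗ[ℂ] H) ⊓ Hod := by
    apply le_antisymm
    · rintro y ⟨ξ, hξ, rfl⟩
      exact ⟨⟨ξ, rfl⟩, (hHod_mem _).mpr (hDev _ hξ)⟩
    · rintro y ⟨⟨ξ, rfl⟩, hyod⟩
      obtain ⟨a, b, ha, hb, rfl⟩ := hdecompW ξ
      have h1 : γ (D a) = -(D a) := hDev a ha
      have h2 : γ (D b) = D b := hDod b hb
      have h3 : γ (D (a + b)) = -(D (a + b)) := (hHod_mem _).mp hyod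
      rw [map_add, map_add, h1, h2, neg_add] at h3
      have h4 : D b = -(D b) := add_left_cancel h3
      have h5 : D b = 0 := hzero_of_neg _ h4
      refine ⟨a, ha, ?_⟩
      simp only [ContinuousLinearMap.coe_coe]
      rw [map_add, h5, add_zero]
  have hMWod_eq : Submodule.map (D : W →ₗ[ℂ] H) Wod = LinearMap.range (D : W →ₗ[ℂ] H) ⊓ Hev := by
    apply le_antisymm
    · rintro y ⟨ξ, hξ, rfl⟩
      exact ⟨⟨ξ, rfl⟩, (hHev_mem _).mpr (hDod _ hξ)⟩
    · rintro y ⟨⟨ξ, rfl⟩, hyev⟩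
      obtain ⟨a, b, ha, hb, rfl⟩ := hdecompW ξ
      have h1 : γ (D a) = -(D a) := hDev a ha
      have h2 : γ (D b) = D b := hDod b hb
      have h3 : γ (D (a + b)) = D (a + b) := (hHev_mem _).mp hyev
      rw [map_add, map_add, h1, h2] at h3
      have h4 : -(D a) = D a := add_right_cancel h3
      have h5 : D a = 0 := hzero_of_neg _ h4.symm
      refine ⟨b, hb, ?_⟩
      simp only [ContinuousLinearMap.coe_coe]
      rw [map_add, h5, zero_add]
  have hrSclosed : IsClosed ((LinearMap.range (S : ↥Wev →ₗ[ℂ] ↥Hod) : Submodule ℂ ↥Hod) : Set ↥Hod) := by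
    have hset : ((LinearMap.range (S : ↥Wev →ₗ[ℂ] ↥Hod) : Submodule ℂ ↥Hod) : Set ↥Hod)
        = Subtype.val ⁻¹' ((Submodule.map (D : W →ₗ[ℂ] H) Wev : Submodule ℂ H) : Set H) := by
      ext y
      simp only [SetLike.mem_coe, LinearMap.mem_range, Set.mem_preimage, Submodule.mem_map]
      constructor
      · rintro ⟨x, rfl⟩
        exact ⟨(x : W), x.2, rfl⟩
      · rintro ⟨ξ, hξ, hval⟩
        exact ⟨⟨ξ, hξ⟩, Subtype.ext hval⟩
    rw [hset, hMWev_eq]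
    have hcl : IsClosed ((LinearMap.range (D : W →ₗ[ℂ] H) ⊓ Hod : Submodule ℂ H) : Set H) := by
      rw [Submodule.coe_inf]
      exact h_ran_closed.inter hHod_closed
    exact hcl.preimage continuous_subtype_val
  have hBWev_eq : Submodule.map (B : W →ₗ[ℂ] H) Wev = Submodule.map (e : H →ₗ[ℂ] H) (Submodule.map (D : W →ₗ[ℂ] H) Wod) := by
    apply le_antisymm
    · rintro y ⟨ξ, hξ, rfl⟩
      refine ⟨D (-(eW ξ)), ⟨-(eW ξ), neg_mem (heWev _ hξ), rfl⟩, ?_⟩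
      simp only [ContinuousLinearMap.coe_coe]
      rw [map_neg, map_neg, hBapp]
    · rintro y ⟨z, ⟨ζ, hζ, rfl⟩, rfl⟩
      refine ⟨-(eW ζ), neg_mem (heWod _ hζ), ?_⟩
      simp only [ContinuousLinearMap.coe_coe]
      rw [hBapp, map_neg, he2, map_neg, map_neg, neg_neg]
  have hrS'closed : IsClosed ((LinearMap.range (S' : ↥Wev →ₗ[ℂ] ↥Hod) : Submodule ℂ ↥Hod) : Set ↥Hod) := by
    have hset : ((LinearMap.range (S' : ↥Wev →ₗ[ℂ] ↥Hod) : Submodule ℂ ↥Hod) : Set ↥Hod)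
        = Subtype.val ⁻¹' ((Submodule.map (B : W →ₗ[ℂ] H) Wev : Submodule ℂ H) : Set H) := by
      ext y
      simp only [SetLike.mem_coe, LinearMap.mem_range, Set.mem_preimage, Submodule.mem_map]
      constructor
      · rintro ⟨x, rfl⟩
        exact ⟨(x : W), x.2, rfl⟩
      · rintro ⟨ξ, hξ, hval⟩
        exact ⟨⟨ξ, hξ⟩, Subtype.ext hval⟩
    have hset2 : ((Submodule.map (B : W →ₗ[ℂ] H) Wev : Submodule ℂ H) : Set H)
        = ⇑e ⁻¹' ((Submodule.map (D : W →ₗ[ℂ] H) Wod : Submodule ℂ H) : Set H) := by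
      rw [hBWev_eq]
      ext z
      simp only [SetLike.mem_coe, Set.mem_preimage, Submodule.mem_map]
      constructor
      · rintro ⟨w, hw, rfl⟩
        simp only [ContinuousLinearMap.coe_coe]
        rw [he_unit]
        exact hw
      · intro hz
        exact ⟨e z, hz, he_unit z⟩
    rw [hset, hset2, hMWod_eq]
    have hcl : IsClosed ((LinearMap.range (D : W →ₗ[ℂ] H) ⊓ Hev : Submodule ℂ H) : Set H) := by
      rw [Submodule.coe_inf]
      exact h_ran_closed.inter hHev_closed
    exact (hcl.preimage e.continuous).preimage continuous_subtype_val
  -- the resolvent argument: orthogonal complement of the range of D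
  have hresolv : ∀ u : H, u ∈ (LinearMap.range (D : W →ₗ[ℂ] H))ᗮ
      → u ∈ Submodule.map ι.toLinearMap (LinearMap.ker (D : W →ₗ[ℂ] H)) := by
    intro u hu
    set ζ : W := Rp u with hζdef
    have hu' : ∀ η : W, (inner ℂ (D η) u : ℂ) = 0 := fun η =>
      (Submodule.mem_orthogonal _ u).mp hu _ ⟨η, rfl⟩
    have hueq : D ζ + Complex.I • ι ζ = u := hRp1 u
    have key : ∀ η : W, (inner ℂ (D η - Complex.I • ι η) (D ζ) : ℂ) = 0 := by
      intro η
      have h1 : (inner ℂ (D η + Complex.I • ι η) u : ℂ) = -Complex.I * inner ℂ (ι η) u := by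
        rw [inner_add_left, hu' η, zero_add, inner_smul_left]
        simp [Complex.conj_I]
      have h2 : (inner ℂ (D η + Complex.I • ι η) (D ζ + Complex.I • ι ζ) : ℂ)
          = inner ℂ (D η) (D ζ) + inner ℂ (ι η) (ι ζ) := by
        rw [inner_add_left, inner_add_right, inner_add_right, inner_smul_left,
          inner_smul_right, inner_smul_right, inner_smul_left, h_symm η ζ]
        simp only [Complex.conj_I]
        linear_combination -(inner ℂ (ι η) (ι ζ) : ℂ) * Complex.I_sq
      have h3 : (inner ℂ (ι η) u : ℂ) = inner ℂ (ι η) (D ζ) + Complex.I * inner ℂ (ι η) (ι ζ) := by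
        rw [← hueq, inner_add_right, inner_smul_right]
      rw [hueq] at h2
      rw [h1, h3] at h2
      rw [inner_sub_left, inner_smul_left]
      simp only [Complex.conj_I]
      linear_combination -h2 - (inner ℂ (ι η) (ι ζ) : ℂ) * Complex.I_sq
    have hDζ : D ζ = 0 := by
      have h6 := key (Rm (D ζ))
      rw [hRm1 (D ζ)] at h6
      exact inner_self_eq_zero.mp h6
    refine ⟨Complex.I • ζ, ?_, ?_⟩
    · show D (Complex.I • ζ) = 0
      rw [map_smul, hDζ, smul_zero]
    · show ι (Complex.I • ζ) = u
      rw [map_smul, ← hueq, hDζ, zero_add]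
  -- orthogonal complement of range S
  have horthS : (LinearMap.range (S : ↥Wev →ₗ[ℂ] ↥Hod))ᗮ
      = Submodule.comap Hod.subtype (Submodule.map ι.toLinearMap (LinearMap.ker (D : W →ₗ[ℂ] H) ⊓ Wod)) := by
    ext u
    constructor
    · intro hu
      have hu1 : (u : H) ∈ (LinearMap.range (D : W →ₗ[ℂ] H))ᗮ := by
        rw [Submodule.mem_orthogonal]
        rintro v ⟨ξ, rfl⟩
        obtain ⟨a, b, ha, hb, rfl⟩ := hdecompW ξ
        rw [map_add, inner_add_left]
        have hza : (inner ℂ (D a) ((u : H)) : ℂ) = 0 := by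
          have h10 := (Submodule.mem_orthogonal _ u).mp hu (S ⟨a, ha⟩) ⟨⟨a, ha⟩, rfl⟩
          rw [Submodule.coe_inner] at h10
          exact h10
        have hzb : (inner ℂ (D b) ((u : H)) : ℂ) = 0 :=
          hevod _ _ (hDod b hb) ((hHod_mem _).mp u.2)
        simp only [ContinuousLinearMap.coe_coe]
        rw [hza, hzb, add_zero]
      obtain ⟨ζ, hζk, hζv⟩ := hresolv _ hu1
      have hζv' : ι ζ = (u : H) := hζv
      obtain ⟨a, b, ha, hb, hab⟩ := hdecompW ζ
      have h9 : γ (ι ζ) = -(ι ζ) := by rw [hζv']; exact (hHod_mem _).mp u.2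
      have h7 : γ (ι a) = ι a := (hWev_mem a).mp ha
      have h8 : γ (ι b) = -(ι b) := (hWod_mem b).mp hb
      rw [hab, map_add, map_add, h7, h8, neg_add] at h9
      have h10 : ι a = -(ι a) := add_right_cancel h9
      have ha0 : a = 0 := hι_inj (by rw [hzero_of_neg _ h10, map_zero])
      have hζb : ζ = b := by rw [hab, ha0, zero_add]
      refine ⟨b, ⟨?_, hb⟩, ?_⟩
      · rw [← hζb]; exact hζk
      · show ι b = (u : H)
        rw [← hζb]
        exact hζv'

    · rintro ⟨ζ, ⟨hζk, hζod⟩, hζv⟩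
      have hζv' : ι ζ = (u : H) := hζv
      rw [Submodule.mem_orthogonal]
      rintro v ⟨x, rfl⟩
      simp only [ContinuousLinearMap.coe_coe]
      rw [Submodule.coe_inner, hSval, ← hζv', h_symm]
      rw [show D ζ = 0 from hζk, inner_zero_right]
  -- orthogonal complement of range S'
  have hepres : ∀ p q : H, (inner ℂ (e p) (e q) : ℂ) = inner ℂ p q := by
    intro p q
    rw [he_sa.isSymmetric.apply_clm, he_unit]
  have horthS' : (LinearMap.range (S' : ↥Wev →ₗ[ℂ] ↥Hod))ᗮ
      = Submodule.comap Hod.subtype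
        (Submodule.map e.toLinearMap (Submodule.map ι.toLinearMap (LinearMap.ker (D : W →ₗ[ℂ] H) ⊓ Wev))) := by
    ext u
    constructor
    · intro hu
      have hu1 : e ((u : H)) ∈ (LinearMap.range (D : W →ₗ[ℂ] H))ᗮ := by
        rw [Submodule.mem_orthogonal]
        rintro v ⟨ξ, rfl⟩
        obtain ⟨a, b, ha, hb, rfl⟩ := hdecompW ξ
        rw [map_add, inner_add_left]
        have heu : γ (e ((u : H))) = e ((u : H)) := by
          rw [hγe, (hHod_mem _).mp u.2, map_neg, neg_neg]
        have hza : (inner ℂ (D a) (e ((u : H))) : ℂ) = 0 := by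
          rw [inner_eq_zero_symm]
          exact hevod _ _ heu (hDev a ha)
        have hzb : (inner ℂ (D b) (e ((u : H))) : ℂ) = 0 := by
          have hx : (-(eW b)) ∈ Wev := neg_mem (heWod _ hb)
          have h10 := (Submodule.mem_orthogonal _ u).mp hu (S' ⟨-(eW b), hx⟩)
            ⟨⟨-(eW b), hx⟩, rfl⟩
          rw [Submodule.coe_inner, hS'val] at h10
          have h11 : B (-(eW b)) = e (D b) := by
            rw [map_neg, hBapp, he2, neg_neg]
          rw [h11] at h10
          have h12 : (inner ℂ (e (D b)) ((u : H)) : ℂ) = inner ℂ (D b) (e ((u : H))) :=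
            he_sa.isSymmetric.apply_clm _ _
          rw [h12] at h10
          exact h10
        simp only [ContinuousLinearMap.coe_coe]
        rw [hza, hzb, add_zero]
      obtain ⟨ζ, hζk, hζv⟩ := hresolv _ hu1
      have hζv' : ι ζ = e ((u : H)) := hζv
      obtain ⟨a, b, ha, hb, hab⟩ := hdecompW ζ
      have h9 : γ (ι ζ) = ι ζ := by
        rw [hζv', hγe, (hHod_mem _).mp u.2, map_neg, neg_neg]
      have h7 : γ (ι a) = ι a := (hWev_mem a).mp ha
      have h8 : γ (ι b) = -(ι b) := (hWod_mem b).mp hb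
      rw [hab, map_add, map_add, h7, h8] at h9
      have h10 : -(ι b) = ι b := add_left_cancel h9
      have hb0 : b = 0 := hι_inj (by rw [hzero_of_neg _ h10.symm, map_zero])
      have hζa : ζ = a := by rw [hab, hb0, add_zero]
      refine ⟨ι ζ, ⟨ζ, ⟨hζk, by rw [hζa]; exact ha⟩, rfl⟩, ?_⟩
      show e (ι ζ) = (u : H)
      rw [hζv', he_unit]
    · rintro ⟨w, ⟨ζ, ⟨hζk, hζev⟩, rfl⟩, hζv⟩
      have hζv' : e (ι ζ) = (u : H) := hζv
      rw [Submodule.mem_orthogonal]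
      rintro v ⟨x, rfl⟩
      simp only [ContinuousLinearMap.coe_coe]
      rw [Submodule.coe_inner, hS'val, ← hζv', hBapp]
      rw [inner_neg_left, hepres, h_symm]
      rw [show D ζ = 0 from hζk, inner_zero_right, neg_zero]
  -- dimensions of the orthogonal complements
  have he_inj : Function.Injective ⇑e := Function.LeftInverse.injective he_unit
  have hJod_le : Submodule.map ι.toLinearMap (LinearMap.ker (D : W →ₗ[ℂ] H) ⊓ Wod) ≤ Hod := by
    rintro y ⟨ζ, ⟨_, hζod⟩, rfl⟩
    exact (hHod_mem _).mpr ((hWod_mem _).mp hζod)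
  have hJev_le : Submodule.map e.toLinearMap (Submodule.map ι.toLinearMap (LinearMap.ker (D : W →ₗ[ℂ] H) ⊓ Wev)) ≤ Hod := by
    rintro y ⟨w, ⟨ζ, ⟨_, hζev⟩, rfl⟩, rfl⟩
    show e.toLinearMap (ι.toLinearMap ζ) ∈ Hod
    rw [hHod_mem]
    show γ (e (ι ζ)) = -(e (ι ζ))
    rw [hγe, (hWev_mem _).mp hζev]
  have hmS : Module.finrank ℂ ↥(LinearMap.range (S : ↥Wev →ₗ[ℂ] ↥Hod))ᗮ
      = Module.finrank ℂ ↥(LinearMap.ker (D : W →ₗ[ℂ] H) ⊓ Wod) := by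
    rw [horthS, (Submodule.comapSubtypeEquivOfLe hJod_le).finrank_eq]
    exact ((Submodule.equivMapOfInjective ι.toLinearMap hι_inj _).finrank_eq).symm
  have hmS' : Module.finrank ℂ ↥(LinearMap.range (S' : ↥Wev →ₗ[ℂ] ↥Hod))ᗮ
      = Module.finrank ℂ ↥(LinearMap.ker (D : W →ₗ[ℂ] H) ⊓ Wev) := by
    rw [horthS', (Submodule.comapSubtypeEquivOfLe hJev_le).finrank_eq,
      ← (Submodule.equivMapOfInjective e.toLinearMap he_inj _).finrank_eq]
    exact ((Submodule.equivMapOfInjective ι.toLinearMap hι_inj _).finrank_eq).symm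
  haveI hcSfin : FiniteDimensional ℂ ↥(LinearMap.range (S : ↥Wev →ₗ[ℂ] ↥Hod))ᗮ := by
    rw [horthS]
    haveI : FiniteDimensional ℂ ↥(Submodule.map ι.toLinearMap (LinearMap.ker (D : W →ₗ[ℂ] H) ⊓ Wod)) :=
      Module.Finite.map _ _
    exact Module.Finite.equiv (Submodule.comapSubtypeEquivOfLe hJod_le).symm
  haveI hcS'fin : FiniteDimensional ℂ ↥(LinearMap.range (S' : ↥Wev →ₗ[ℂ] ↥Hod))ᗮ := by
    rw [horthS']
    haveI : FiniteDimensional ℂ ↥(Submodule.map ι.toLinearMap (LinearMap.ker (D : W →ₗ[ℂ] H) ⊓ Wev)) :=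
      Module.Finite.map _ _
    haveI : FiniteDimensional ℂ ↥(Submodule.map e.toLinearMap
        (Submodule.map ι.toLinearMap (LinearMap.ker (D : W →ₗ[ℂ] H) ⊓ Wev))) :=
      Module.Finite.map _ _
    exact Module.Finite.equiv (Submodule.comapSubtypeEquivOfLe hJev_le).symm
  -- apply the index invariance theorem
  have hmain := index_invariance S S' hKcpt hkSfin hkS'fin hrSclosed hrS'closed hcSfin hcS'fin
  rw [hnS, hnS', hmS, hmS'] at hmain
  -- conclude
  show Module.finrank ℂ ↥(LinearMap.ker (D : W →ₗ[ℂ] H) ⊓ Wev) = Module.finrank ℂ ↥(LinearMap.ker (D : W →ₗ[ℂ] H) ⊓ Wod)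
  omega
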